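/- Let Q(x) = ∫_x^∞ (1/√(2π))·e^{−t²/2} dt be the Gaussian tail function, and let q : (0,1) → ℝ satisfy Q(q(ε)) = ε for all ε ∈ (0,1). Then for any constants K > 0 and b > 0, the function ε ↦ ε + (1−ε)·K·exp(b·q(ε)) is convex on the interval (0,1). -/

import Mathlib

open MeasureTheory Filter Set Topology

noncomputable def gPDF (t : ℝ) : ℝ := (Real.sqrt (2 * Real.pi))⁻¹ * Real.exp (-t ^ 2 / 2)

lemma gPDF_pos (t : ℝ) : 0 < gPDF t := by
  have h : 0 < Real.sqrt (2 * Real.pi) := Real.sqrt_pos.2 (by positivity)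
  exact mul_pos (inv_pos.2 h) (Real.exp_pos _)

lemma continuous_gPDF : Continuous gPDF := by
  unfold gPDF; fun_prop

lemma gPDF_eq (t : ℝ) : gPDF t = (Real.sqrt (2 * Real.pi))⁻¹ * Real.exp (-(1/2 : ℝ) * t ^ 2) := by
  unfold gPDF; ring_nf

lemma integrable_gPDF : Integrable gPDF := by
  have h := (integrable_exp_neg_mul_sq (by norm_num : (0:ℝ) < 1/2)).const_mul
    (Real.sqrt (2 * Real.pi))⁻¹
  refine h.congr (Filter.Eventually.of_forall fun t => ?_)
  rw [gPDF_eq]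

lemma integral_gPDF : ∫ t, gPDF t = 1 := by
  have h1 : ∫ t, gPDF t = (Real.sqrt (2 * Real.pi))⁻¹ * ∫ t : ℝ, Real.exp (-(1/2 : ℝ) * t ^ 2) := by
    rw [← integral_const_mul]
    exact integral_congr_ae (Filter.Eventually.of_forall fun t => gPDF_eq t)
  rw [h1, integral_gaussian]
  have : Real.pi / (1/2 : ℝ) = 2 * Real.pi := by ring
  rw [this]
  exact inv_mul_cancel₀ (ne_of_gt (Real.sqrt_pos.2 (by positivity)))

lemma integrable_mul_gPDF : Integrable (fun t => t * gPDF t) := by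
  have h := (integrable_mul_exp_neg_mul_sq (by norm_num : (0:ℝ) < 1/2)).const_mul
    (Real.sqrt (2 * Real.pi))⁻¹
  refine h.congr (Filter.Eventually.of_forall fun t => ?_)
  simp only [gPDF_eq]; ring

lemma hasDerivAt_neg_gPDF (x : ℝ) : HasDerivAt (fun t => -gPDF t) (x * gPDF x) x := by
  have h1 : HasDerivAt (fun t : ℝ => -t ^ 2 / 2) (-x) x := by
    have := ((hasDerivAt_pow 2 x).neg).div_const 2
    simpa using this.congr_deriv (by ring)
  have h2 := (h1.exp.const_mul (Real.sqrt (2 * Real.pi))⁻¹).neg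
  refine h2.congr_deriv ?_
  unfold gPDF; ring


section
variable {Q : ℝ → ℝ}
  (hQ : ∀ x : ℝ, Q x = ∫ t in Set.Ioi x, (Real.sqrt (2 * Real.pi))⁻¹ * Real.exp (-t ^ 2 / 2))
include hQ

lemma Q_eq (x : ℝ) : Q x = ∫ t in Set.Ioi x, gPDF t := hQ x

lemma Q_eq' (x : ℝ) : Q x = 1 - ∫ t in Set.Iic x, gPDF t := by
  have h := intervalIntegral.integral_Iic_add_Ioi (b := x) integrable_gPDF.integrableOn integrable_gPDF.integrableOn
  rw [integral_gPDF] at h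
  rw [Q_eq hQ]; linarith

lemma hasDerivAt_Q (x : ℝ) : HasDerivAt Q (-gPDF x) x := by
  have heq : Q = fun u => Q 0 - ∫ t in (0:ℝ)..u, gPDF t := by
    funext u
    rw [Q_eq' hQ u, Q_eq' hQ 0,
      ← intervalIntegral.integral_Iic_sub_Iic integrable_gPDF.integrableOn integrable_gPDF.integrableOn]
    ring
  rw [heq]
  have h := intervalIntegral.integral_hasDerivAt_right (a := 0) (b := x)
    (integrable_gPDF.intervalIntegrable)
    (continuous_gPDF.stronglyMeasurableAtFilter _ _)
    continuous_gPDF.continuousAt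
  simpa using h.const_sub (Q 0)

lemma strictAnti_Q : StrictAnti Q :=
  strictAnti_of_deriv_neg fun x => by
    rw [(hasDerivAt_Q hQ x).deriv]; exact neg_neg_iff_pos.2 (gPDF_pos x)

lemma Q_pos (x : ℝ) : 0 < Q x := by
  rw [Q_eq hQ]
  rw [setIntegral_pos_iff_support_of_nonneg_ae
    (Filter.Eventually.of_forall fun t => (gPDF_pos t).le) integrable_gPDF.integrableOn]
  have : Function.support gPDF = Set.univ :=
    Set.eq_univ_iff_forall.2 fun t => (gPDF_pos t).ne'
  rw [this, Set.univ_inter, Real.volume_Ioi]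
  exact ENNReal.zero_lt_top

lemma Q_lt_one (x : ℝ) : Q x < 1 := by
  rw [Q_eq' hQ]
  have : 0 < ∫ t in Set.Iic x, gPDF t := by
    rw [setIntegral_pos_iff_support_of_nonneg_ae
      (Filter.Eventually.of_forall fun t => (gPDF_pos t).le) integrable_gPDF.integrableOn]
    have : Function.support gPDF = Set.univ :=
      Set.eq_univ_iff_forall.2 fun t => (gPDF_pos t).ne'
    rw [this, Set.univ_inter, Real.volume_Iic]
    exact ENNReal.zero_lt_top
  linarith

end


section
variable {Q : ℝ → ℝ}
  (hQ : ∀ x : ℝ, Q x = ∫ t in Set.Ioi x, (Real.sqrt (2 * Real.pi))⁻¹ * Real.exp (-t ^ 2 / 2))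
include hQ

lemma tendsto_neg_gPDF_atBot : Tendsto (fun t : ℝ => -gPDF t) atBot (𝓝 0) := by
  have h2 : Tendsto (fun t : ℝ => t ^ 2) atBot atTop := by
    have h := (tendsto_pow_atTop (two_ne_zero)).comp (tendsto_neg_atBot_atTop (G := ℝ))
    have e : ((fun x : ℝ => x ^ 2) ∘ Neg.neg) = fun t : ℝ => t ^ 2 := by
      funext t; simp
    rwa [e] at h
  have h3 : Tendsto (fun t : ℝ => -t ^ 2 / 2) atBot atBot := by
    have h := (tendsto_neg_atTop_atBot (G := ℝ)).comp (h2.atTop_div_const two_pos)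
    have e : ((Neg.neg : ℝ → ℝ) ∘ fun t : ℝ => t ^ 2 / 2) = fun t : ℝ => -t ^ 2 / 2 := by
      funext t; simp [neg_div]
    rwa [e] at h
  have h4 : Tendsto (fun t : ℝ => Real.exp (-t ^ 2 / 2)) atBot (𝓝 0) :=
    Real.tendsto_exp_atBot.comp h3
  have h5 := (h4.const_mul (Real.sqrt (2 * Real.pi))⁻¹).neg
  simpa [gPDF] using h5

lemma integral_Iic_mul_gPDF (x : ℝ) : ∫ t in Set.Iic x, t * gPDF t = -gPDF x := by
  have h := integral_Iic_of_hasDerivAt_of_tendsto' (a := x)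
    (f := fun t => -gPDF t) (f' := fun t => t * gPDF t)
    (fun t _ => hasDerivAt_neg_gPDF t) integrable_mul_gPDF.integrableOn
    (tendsto_neg_gPDF_atBot hQ)
  rw [h]; ring

lemma mills {x : ℝ} (hx : x < 0) : (-x) * (1 - Q x) ≤ gPDF x := by
  have hΦ : 1 - Q x = ∫ t in Set.Iic x, gPDF t := by rw [Q_eq' hQ]; ring
  have hint : IntegrableOn (fun t => x⁻¹ * (t * gPDF t)) (Set.Iic x) :=
    (integrable_mul_gPDF.const_mul x⁻¹).integrableOn
  have hle : ∫ t in Set.Iic x, gPDF t ≤ ∫ t in Set.Iic x, x⁻¹ * (t * gPDF t) := by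
    apply setIntegral_mono_on integrable_gPDF.integrableOn hint measurableSet_Iic
    intro t ht
    have h1 : 1 ≤ t / x := (le_div_iff_of_neg hx).2 (by simpa using ht.out)
    have := le_mul_of_one_le_left (gPDF_pos t).le h1
    calc gPDF t ≤ t / x * gPDF t := this
      _ = x⁻¹ * (t * gPDF t) := by ring
  have heq : ∫ t in Set.Iic x, x⁻¹ * (t * gPDF t) = x⁻¹ * (-gPDF x) := by
    rw [integral_const_mul, integral_Iic_mul_gPDF hQ]
  have h2 : 1 - Q x ≤ gPDF x / (-x) := by
    rw [hΦ]
    refine hle.trans ?_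
    rw [heq]
    rw [show x⁻¹ * (-gPDF x) = gPDF x / (-x) by field_simp]
  have h3 := (le_div_iff₀ (neg_pos.2 hx)).1 h2
  linarith [h3]

noncomputable def Ffun (Q : ℝ → ℝ) (K b : ℝ) (x : ℝ) : ℝ :=
  1 - K * Real.exp (b * x) - K * b * ((1 - Q x) * Real.exp (b * x) / gPDF x)

lemma hasDerivAt_Ffun (K b : ℝ) (x : ℝ) : HasDerivAt (Ffun Q K b)
    (-(K * b * Real.exp (b * x)) * (2 + (b + x) * (1 - Q x) / gPDF x)) x := by
  have hφ : gPDF x ≠ 0 := (gPDF_pos x).ne'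
  have h1 : HasDerivAt (fun u => 1 - Q u) (gPDF x) x := by
    simpa using (hasDerivAt_Q hQ x).const_sub 1
  have h2 : HasDerivAt (fun u : ℝ => Real.exp (b * u)) (Real.exp (b * x) * b) x := by
    simpa using ((hasDerivAt_id x).const_mul b).exp
  have h3 : HasDerivAt gPDF (-(x * gPDF x)) x := by
    simpa [Pi.neg_def] using (hasDerivAt_neg_gPDF x).neg
  have h4 := (h1.mul h2).div h3 hφ
  have h5 := ((h2.const_mul K).const_sub 1).sub (h4.const_mul (K * b))
  refine h5.congr_deriv ?_
  simp only [Pi.mul_apply]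
  field_simp
  ring

lemma antitone_Ffun (K b : ℝ) (hK : 0 < K) (hb : 0 < b) : Antitone (Ffun Q K b) := by
  apply antitone_of_deriv_nonpos
  · exact fun x => (hasDerivAt_Ffun hQ K b x).differentiableAt
  · intro x
    rw [(hasDerivAt_Ffun hQ K b x).deriv]
    have hφ := gPDF_pos x
    have hΦ : 0 ≤ 1 - Q x := by linarith [Q_lt_one hQ x]
    have key : -gPDF x ≤ x * (1 - Q x) := by
      rcases le_or_gt 0 x with h | h
      · nlinarith
      · have := mills hQ h; nlinarith
    have hnum : -gPDF x ≤ (b + x) * (1 - Q x) := by nlinarith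
    have h2 : (-1 : ℝ) ≤ (b + x) * (1 - Q x) / gPDF x := by
      have := (div_le_div_iff_of_pos_right hφ).2 hnum
      rwa [neg_div, div_self hφ.ne'] at this
    have h3 : 0 ≤ 2 + (b + x) * (1 - Q x) / gPDF x := by linarith
    rw [neg_mul]
    exact neg_nonpos_of_nonneg (mul_nonneg (by positivity) h3)

end

section
variable {Q q : ℝ → ℝ}
  (hQ : ∀ x : ℝ, Q x = ∫ t in Set.Ioi x, (Real.sqrt (2 * Real.pi))⁻¹ * Real.exp (-t ^ 2 / 2))
  (hq : ∀ ε ∈ Set.Ioo (0:ℝ) 1, Q (q ε) = ε)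
include hQ hq

lemma strictAntiOn_q : StrictAntiOn q (Set.Ioo (0:ℝ) 1) := by
  intro a ha c hc hac
  have h : Q (q a) < Q (q c) := by rw [hq a ha, hq c hc]; exact hac
  exact (strictAnti_Q hQ).lt_iff_gt.1 h

lemma continuousAt_q {ε : ℝ} (hε : ε ∈ Set.Ioo (0:ℝ) 1) : ContinuousAt q ε := by
  rw [ContinuousAt]
  refine tendsto_order.2 ⟨?_, ?_⟩
  · intro a ha
    have h1 : ε < Q a := by rw [← hq ε hε]; exact strictAnti_Q hQ ha
    filter_upwards [Ioo_mem_nhds hε.1 h1] with y hy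
    have hy' : y ∈ Set.Ioo (0:ℝ) 1 := ⟨hy.1, lt_trans hy.2 (Q_lt_one hQ a)⟩
    have h2 : Q (q y) < Q a := by rw [hq y hy']; exact hy.2
    exact (strictAnti_Q hQ).lt_iff_gt.1 h2
  · intro a ha
    have h1 : Q a < ε := by rw [← hq ε hε]; exact strictAnti_Q hQ ha
    filter_upwards [Ioo_mem_nhds h1 hε.2] with y hy
    have hy' : y ∈ Set.Ioo (0:ℝ) 1 := ⟨lt_trans (Q_pos hQ a) hy.1, hy.2⟩
    have h2 : Q a < Q (q y) := by rw [hq y hy']; exact hy.1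
    exact (strictAnti_Q hQ).lt_iff_gt.1 h2

lemma hasDerivAt_q {ε : ℝ} (hε : ε ∈ Set.Ioo (0:ℝ) 1) :
    HasDerivAt q (-gPDF (q ε))⁻¹ ε := by
  refine HasDerivAt.of_local_left_inverse (continuousAt_q hQ hq hε)
    (hasDerivAt_Q hQ (q ε)) (neg_ne_zero.2 (gPDF_pos (q ε)).ne') ?_
  filter_upwards [Ioo_mem_nhds hε.1 hε.2] with y hy using hq y hy

end

theorem convexOn_eps_plus_exp_Qinv
    (Q q : ℝ → ℝ)
    (hQ : ∀ x : ℝ, Q x = ∫ t in Set.Ioi x, (Real.sqrt (2 * Real.pi))⁻¹ * Real.exp (-t ^ 2 / 2))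
    (hq : ∀ ε ∈ Set.Ioo (0:ℝ) 1, Q (q ε) = ε)
    (K b : ℝ) (hK : 0 < K) (hb : 0 < b) :
    ConvexOn ℝ (Set.Ioo (0:ℝ) 1) (fun ε => ε + (1 - ε) * K * Real.exp (b * q ε)) := by
  set f : ℝ → ℝ := fun ε => ε + (1 - ε) * K * Real.exp (b * q ε) with hf
  have hderiv : ∀ ε ∈ Set.Ioo (0:ℝ) 1, HasDerivAt f (Ffun Q K b (q ε)) ε := by
    intro ε hε
    have hφ : gPDF (q ε) ≠ 0 := (gPDF_pos _).ne'
    have hq' := hasDerivAt_q hQ hq hε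
    have h2 : HasDerivAt (fun y => Real.exp (b * q y))
        (Real.exp (b * q ε) * (b * (-gPDF (q ε))⁻¹)) ε := (hq'.const_mul b).exp
    have h3 : HasDerivAt (fun y : ℝ => (1 - y) * K) (-1 * K) ε :=
      (((hasDerivAt_id ε).const_sub 1).mul_const K)
    have h5 := (hasDerivAt_id ε).add (h3.mul h2)
    refine h5.congr_deriv ?_
    unfold Ffun
    rw [hq ε hε]
    field_simp [hφ]
    ring
  have hmono : MonotoneOn (deriv f) (interior (Set.Ioo (0:ℝ) 1)) := by
    rw [interior_Ioo]
    intro ε₁ h₁ ε₂ h₂ hle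
    rw [(hderiv ε₁ h₁).deriv, (hderiv ε₂ h₂).deriv]
    rcases eq_or_lt_of_le hle with rfl | hlt
    · exact le_rfl
    · exact antitone_Ffun hQ K b hK hb (strictAntiOn_q hQ hq h₁ h₂ hlt).le
  refine MonotoneOn.convexOn_of_deriv (convex_Ioo 0 1) ?_ ?_ hmono
  · exact fun ε hε => (hderiv ε hε).continuousAt.continuousWithinAt
  · rw [interior_Ioo]
    exact fun ε hε => (hderiv ε hε).differentiableAt.differentiableWithinAt
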